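/- For α, β > -1, n ≥ 1, and x ∈ [0,1], the first moment of the Beta operator is T_{n,1}^{α,β}(x) = B_n^{α,β}(e_1 - x·e_0; x) = (α + 1 - (α+β+2)x)/(n+α+β+2). -/

import Mathlib

open MeasureTheory intervalIntegral Filter

/-- The Beta operator with Jacobi weights: `B_n^{α,β}(f;x)`. -/
noncomputable def Bop (n α β : ℝ) (f : ℝ → ℝ) (x : ℝ) : ℝ :=
  (∫ t in (0:ℝ)..1, t ^ (n * x + α) * (1 - t) ^ (n - n * x + β) * f t) /
  (∫ t in (0:ℝ)..1, t ^ (n * x + α) * (1 - t) ^ (n - n * x + β))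

/-- The `m`-th central moment `T_{n,m}^{α,β}(x)`. -/
noncomputable def T (n α β : ℝ) (m : ℕ) (x : ℝ) : ℝ :=
  Bop n α β (fun t => (t - x) ^ m) x

namespace FirstMomentAux

/-- The real Beta-type integral. -/
noncomputable def I (a b : ℝ) : ℝ := ∫ t in (0:ℝ)..1, t ^ a * (1 - t) ^ b

lemma eqOn (a b : ℝ) : ∀ t ∈ Set.uIcc (0:ℝ) 1,
    ((fun t : ℝ => ((t ^ a * (1 - t) ^ b : ℝ) : ℂ)) t)
      = (fun t : ℝ => (t : ℂ) ^ ((a + 1 : ℂ) - 1) * ((1 : ℂ) - t) ^ ((b + 1 : ℂ) - 1)) t := by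
  intro t ht
  rw [Set.uIcc_of_le zero_le_one] at ht
  have h1 : (0:ℝ) ≤ t := ht.1
  have h2 : (0:ℝ) ≤ 1 - t := by linarith [ht.2]
  push_cast
  rw [Complex.ofReal_cpow h1, Complex.ofReal_cpow h2]
  push_cast
  ring_nf

lemma castI {a b : ℝ} (ha : -1 < a) (hb : -1 < b) :
    ((I a b : ℝ) : ℂ) = Complex.betaIntegral (a + 1) (b + 1) := by
  rw [I, Complex.betaIntegral, ← intervalIntegral.integral_ofReal]
  exact intervalIntegral.integral_congr (eqOn a b)

lemma integrable {a b : ℝ} (ha : -1 < a) (hb : -1 < b) :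
    IntervalIntegrable (fun t : ℝ => t ^ a * (1 - t) ^ b) volume 0 1 := by
  have h : IntervalIntegrable
      (fun t : ℝ => (t : ℂ) ^ ((a + 1 : ℂ) - 1) * ((1 : ℂ) - t) ^ ((b + 1 : ℂ) - 1))
      volume 0 1 := by
    have := Complex.betaIntegral_convergent (u := (a+1:ℂ)) (v := (b+1:ℂ))
      (by simp; linarith) (by simp; linarith)
    simpa using this
  have h2 : IntervalIntegrable (fun t : ℝ => ((t ^ a * (1 - t) ^ b : ℝ) : ℂ)) volume 0 1 := by
    refine h.congr ?_
    intro t ht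
    exact (eqOn a b t (Set.uIoc_subset_uIcc ht)).symm
  constructor
  · simpa [IntegrableOn] using h2.1.re
  · simpa using h2.2.re

lemma I_pos {a b : ℝ} (ha : -1 < a) (hb : -1 < b) : 0 < I a b := by
  refine intervalIntegral.intervalIntegral_pos_of_pos_on (integrable ha hb) ?_ one_pos
  intro t ht
  have h1 : 0 < t := ht.1
  have h2 : 0 < 1 - t := by linarith [ht.2]
  positivity

lemma beta_key {u v : ℂ} (hur : 0 < u.re) (hvr : 0 < v.re) :
    Complex.betaIntegral (u + 1) v = u / (u + v) * Complex.betaIntegral u v := by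
  have hune : u ≠ 0 := by
    intro h; rw [h] at hur; simp at hur
  have huvne : u + v ≠ 0 := by
    intro h
    have := congrArg Complex.re h
    simp [Complex.add_re] at this
    linarith
  have hu1r : 0 < (u + 1).re := by simp [Complex.add_re]; linarith
  have hG : Complex.Gamma (u + v) ≠ 0 := by
    apply Complex.Gamma_ne_zero
    intro m h
    have := congrArg Complex.re h
    simp [Complex.add_re] at this
    have h0 : (0:ℝ) ≤ (m:ℝ) := Nat.cast_nonneg m
    linarith
  have h1 := Complex.Gamma_mul_Gamma_eq_betaIntegral hur hvr
  have h2 := Complex.Gamma_mul_Gamma_eq_betaIntegral hu1r hvr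
  rw [Complex.Gamma_add_one u hune] at h2
  have huv1 : u + 1 + v = (u + v) + 1 := by ring
  rw [huv1, Complex.Gamma_add_one (u + v) huvne] at h2
  have h3 : Complex.Gamma (u + v) * ((u + v) * Complex.betaIntegral (u + 1) v)
      = Complex.Gamma (u + v) * (u * Complex.betaIntegral u v) := by
    linear_combination u * h1 - h2
  have h4 := mul_left_cancel₀ hG h3
  rw [div_mul_eq_mul_div, eq_div_iff huvne]
  linear_combination h4

lemma beta_step {a b : ℝ} (ha : -1 < a) (hb : -1 < b) :
    I (a + 1) b = (a + 1) / (a + b + 2) * I a b := by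
  have key := beta_key (u := (a:ℂ) + 1) (v := (b:ℂ) + 1)
    (by simp; linarith) (by simp; linarith)
  have cast1 : ((I (a+1) b : ℝ) : ℂ) = Complex.betaIntegral ((a:ℂ) + 1 + 1) ((b:ℂ) + 1) := by
    rw [castI (by linarith) hb]
    norm_num
  have cast2 : ((I a b : ℝ) : ℂ) = Complex.betaIntegral ((a:ℂ) + 1) ((b:ℂ) + 1) := castI ha hb
  have hne : ((a:ℂ) + 1) + ((b:ℂ) + 1) ≠ 0 := by
    intro h
    have := congrArg Complex.re h
    simp at this
    linarith
  have : ((I (a+1) b : ℝ) : ℂ) = (((a + 1) / (a + b + 2) * I a b : ℝ) : ℂ) := by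
    rw [cast1, key, ← cast2]
    push_cast
    rw [div_mul_eq_mul_div, div_mul_eq_mul_div, div_eq_div_iff hne (by
      intro h
      have := congrArg Complex.re h
      simp at this
      linarith)]
    ring
  exact_mod_cast this

end FirstMomentAux

open FirstMomentAux in
theorem first_moment (α β : ℝ) (hα : α > -1) (hβ : β > -1)
    (n : ℕ) (hn : 1 ≤ n) (x : ℝ) (hx : x ∈ Set.Icc (0:ℝ) 1) :
    T n α β 1 x = (α + 1 - (α + β + 2) * x) / (n + α + β + 2) := by
  obtain ⟨hx0, hx1⟩ := hx
  have hn1 : (1:ℝ) ≤ (n:ℝ) := by exact_mod_cast hn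
  set A : ℝ := n * x + α with hA
  set B : ℝ := n - n * x + β with hB
  have hA1 : -1 < A := by
    have : 0 ≤ (n:ℝ) * x := by positivity
    simp only [hA]; linarith
  have hB1 : -1 < B := by
    have : (n:ℝ) * x ≤ n := by nlinarith
    simp only [hB]; linarith
  have hden : A + B + 2 = n + α + β + 2 := by simp only [hA, hB]; ring
  have hdpos : (0:ℝ) < n + α + β + 2 := by linarith
  have hIpos := I_pos hA1 hB1
  -- rewrite the numerator
  have hnum : (∫ t in (0:ℝ)..1, t ^ A * (1 - t) ^ B * (t - x) ^ 1)
      = I (A + 1) B - x * I A B := by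
    have hsplit : ∀ t ∈ Set.uIcc (0:ℝ) 1,
        t ^ A * (1 - t) ^ B * (t - x) ^ 1
          = t ^ (A + 1) * (1 - t) ^ B - x * (t ^ A * (1 - t) ^ B) := by
      intro t ht
      rw [Set.uIcc_of_le zero_le_one] at ht
      rcases eq_or_lt_of_le ht.1 with h0 | h0
      · have hA1' : A + 1 ≠ 0 := by linarith
        rw [← h0]
        rw [Real.zero_rpow hA1']
        ring_nf
      · rw [Real.rpow_add_one (ne_of_gt h0)]
        ring
    rw [intervalIntegral.integral_congr hsplit]
    rw [intervalIntegral.integral_sub (integrable (by linarith) hB1)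
      ((integrable hA1 hB1).const_mul x)]
    rw [intervalIntegral.integral_const_mul]
    rfl
  have hstep := beta_step hA1 hB1
  show (∫ t in (0:ℝ)..1, t ^ A * (1 - t) ^ B * (t - x) ^ 1) / I A B
      = (α + 1 - (α + β + 2) * x) / (n + α + β + 2)
  rw [hnum, hstep, hden]
  have hAeq : A + 1 = n * x + α + 1 := by simp [hA]
  rw [hAeq]
  field_simp
  ring
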